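/- Let d ≥ 1 and let P_1, …, P_{d+1} ⊆ ℝ^d be pairwise disjoint finite sets with |P_i| ≤ d+1 and 0 ∈ conv(P_i) for every i = 1, …, d+1. Then there exists a set C ⊆ P_1 ∪ … ∪ P_{d+1} with 0 ∈ conv(C) and |C ∩ P_i| ≤ ⌈(d+1)/2⌉ for every i, i.e., a ⌈(d+1)/2⌉-colorful choice containing the origin in its convex hull. -/

import Mathlib

open scoped Classical

section Helpers
open scoped RealInnerProductSpace
open Metric Finset

variable {E : Type*} [NormedAddCommGroup E] [InnerProductSpace ℝ E]

lemma step_decreases (y z : E) (h : ⟪y, z - y⟫ < 0) :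
    ∃ t : ℝ, 0 ≤ 1 - t ∧ 0 ≤ t ∧ (1 - t) + t = 1 ∧ ‖(1 - t) • y + t • z‖ < ‖y‖ := by
  have hzy : z - y ≠ 0 := by
    intro h0; rw [h0, inner_zero_right] at h; exact lt_irrefl _ h
  have hn : (0:ℝ) < ‖z - y‖ ^ 2 := pow_pos (norm_pos_iff.mpr hzy) 2
  set c : ℝ := ⟪y, z - y⟫ with hc
  have hcneg : (0:ℝ) < -c := neg_pos.mpr h
  have hdpos : (0:ℝ) < -c / ‖z - y‖ ^ 2 := div_pos hcneg hn
  refine ⟨min 1 (-c / ‖z - y‖ ^ 2), ?_, ?_, by ring, ?_⟩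
  · simp [min_le_left]
  · exact le_min zero_le_one hdpos.le
  · set t : ℝ := min 1 (-c / ‖z - y‖ ^ 2) with ht
    have ht0 : 0 < t := lt_min one_pos hdpos
    have ht1 : t ≤ 1 := min_le_left _ _
    have htc : t * ‖z - y‖ ^ 2 ≤ -c := by
      have h' : t ≤ -c / ‖z - y‖ ^ 2 := min_le_right _ _
      calc t * ‖z - y‖ ^ 2 ≤ (-c / ‖z - y‖ ^ 2) * ‖z - y‖ ^ 2 :=
            mul_le_mul_of_nonneg_right h' hn.le
        _ = -c := by field_simp
    have hq : (1 - t) • y + t • z = y + t • (z - y) := by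
      rw [smul_sub, sub_smul, one_smul]; abel
    rw [hq]
    have hsq : ‖y + t • (z - y)‖ ^ 2 < ‖y‖ ^ 2 := by
      rw [norm_add_sq_real]
      have h1 : ⟪y, t • (z - y)⟫ = t * c := real_inner_smul_right _ _ _
      have h2 : ‖t • (z - y)‖ ^ 2 = t ^ 2 * ‖z - y‖ ^ 2 := by
        rw [norm_smul, Real.norm_eq_abs, abs_of_pos ht0]; ring
      rw [h1, h2]
      nlinarith
    exact lt_of_pow_lt_pow_left₀ 2 (norm_nonneg y) hsq

lemma mem_convexHull_face (s : Finset E) (y : E)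
    (hy : y ∈ convexHull ℝ (s : Set E))
    (hface : ∀ z ∈ s, ‖y‖ ^ 2 ≤ ⟪y, z⟫) :
    y ∈ convexHull ℝ {z : E | z ∈ s ∧ ⟪y, z⟫ = ‖y‖ ^ 2} := by
  rw [Finset.convexHull_eq] at hy
  obtain ⟨w, hw0, hw1, hwy⟩ := hy
  have hyrep : y = ∑ z ∈ s, w z • z := by
    rw [← hwy, Finset.centerMass_eq_of_sum_1 _ _ hw1]; rfl
  have hinner : ‖y‖ ^ 2 = ∑ z ∈ s, w z * ⟪y, z⟫ := by
    calc ‖y‖ ^ 2 = ⟪y, y⟫ := (real_inner_self_eq_norm_sq y).symm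
      _ = ⟪y, ∑ z ∈ s, w z • z⟫ := by rw [← hyrep]
      _ = ∑ z ∈ s, ⟪y, w z • z⟫ := inner_sum _ _ _
      _ = ∑ z ∈ s, w z * ⟪y, z⟫ :=
          Finset.sum_congr rfl fun z _ => real_inner_smul_right _ _ _
  have hsum0 : ∑ z ∈ s, w z * (⟪y, z⟫ - ‖y‖ ^ 2) = 0 := by
    simp only [mul_sub, Finset.sum_sub_distrib, ← Finset.sum_mul, hw1, one_mul, ← hinner,
      sub_self]
  have hterm : ∀ z ∈ s, w z * (⟪y, z⟫ - ‖y‖ ^ 2) = 0 :=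
    (Finset.sum_eq_zero_iff_of_nonneg
      (fun z hz => mul_nonneg (hw0 z hz) (sub_nonneg.mpr (hface z hz)))).mp hsum0
  set s' : Finset E := s.filter (fun z => w z ≠ 0) with hs'
  have h1' : ∑ z ∈ s', w z = 1 := (Finset.sum_filter_of_ne fun z _ h => h).trans hw1
  have hrep' : y = ∑ z ∈ s', w z • z := by
    rw [hyrep]
    refine (Finset.sum_filter_of_ne fun z _ h => ?_).symm
    intro hw; exact h (by rw [hw, zero_smul])
  have hmem : ∀ z ∈ s', z ∈ {z : E | z ∈ s ∧ ⟪y, z⟫ = ‖y‖ ^ 2} := by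
    intro z hz
    have hzs : z ∈ s := (Finset.mem_filter.mp hz).1
    have hwz : w z ≠ 0 := (Finset.mem_filter.mp hz).2
    refine ⟨hzs, ?_⟩
    rcases mul_eq_zero.mp (hterm z hzs) with h | h
    · exact absurd h hwz
    · linarith [sub_eq_zero.mp h]
  have hcm := Finset.centerMass_mem_convexHull s'
    (fun z hz => hw0 z (Finset.mem_filter.mp hz).1) (by rw [h1']; norm_num) hmem
  rw [Finset.centerMass_eq_of_sum_1 _ _ h1'] at hcm
  rwa [← hrep'] at hcm

lemma card_le_of_on_hyperplane [FiniteDimensional ℝ E] (t : Finset E) (y : E) (hy : y ≠ 0)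
    (hAI : AffineIndependent ℝ ((↑) : t → E)) (hsub : ∀ z ∈ t, ⟪y, z⟫ = ‖y‖ ^ 2) :
    t.card ≤ Module.finrank ℝ E := by
  rcases t.eq_empty_or_nonempty with rfl | hne
  · simp
  have hpos : 1 ≤ t.card := Finset.card_pos.mpr hne
  have hc : Fintype.card ↥t = (t.card - 1) + 1 := by rw [Fintype.card_coe]; omega
  have hfr := hAI.finrank_vectorSpan hc
  have hle : vectorSpan ℝ (Set.range ((↑) : t → E)) ≤ (ℝ ∙ y)ᗮ := by
    rw [Subtype.range_coe, vectorSpan_def]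
    apply Submodule.span_le.mpr
    rintro v hv
    obtain ⟨a, ha, b, hb, rfl⟩ := Set.mem_vsub.mp hv
    rw [SetLike.mem_coe, Submodule.mem_orthogonal_singleton_iff_inner_right]
    rw [vsub_eq_sub, inner_sub_right, hsub a ha, hsub b hb, sub_self]
  have hlt : (ℝ ∙ y)ᗮ < ⊤ := by
    refine lt_top_iff_ne_top.mpr fun htop => hy ?_
    have hmem : y ∈ (ℝ ∙ y)ᗮ := htop ▸ Submodule.mem_top
    exact inner_self_eq_zero.mp
      (Submodule.mem_orthogonal_singleton_iff_inner_right.mp hmem)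
  have h1 : t.card - 1 ≤ Module.finrank ℝ ((ℝ ∙ y)ᗮ) := by
    rw [← hfr]; exact Submodule.finrank_mono hle
  have h2 : Module.finrank ℝ ((ℝ ∙ y)ᗮ) < Module.finrank ℝ E := Submodule.finrank_lt hlt.ne
  omega

end Helpers

section Main
open scoped RealInnerProductSpace
open Metric Finset

theorem half_colorful_choice (d : ℕ) (hd : 1 ≤ d)
    (P : Fin (d + 1) → Finset (EuclideanSpace ℝ (Fin d)))
    (hdisj : ∀ i j, i ≠ j → Disjoint (P i) (P j))
    (hcard : ∀ i, (P i).card ≤ d + 1)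
    (h0 : ∀ i, (0 : EuclideanSpace ℝ (Fin d)) ∈
      convexHull ℝ ((P i : Set (EuclideanSpace ℝ (Fin d))))) :
    ∃ C : Finset (EuclideanSpace ℝ (Fin d)),
      C ⊆ Finset.univ.biUnion P ∧
      (0 : EuclideanSpace ℝ (Fin d)) ∈
        convexHull ℝ ((C : Set (EuclideanSpace ℝ (Fin d)))) ∧
      ∀ i, (C ∩ P i).card ≤ (d + 2) / 2 := by
  classical
  have hne : ∀ i, (P i).Nonempty := fun i =>
    Finset.coe_nonempty.mp (convexHull_nonempty_iff.mp ⟨0, h0 i⟩)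
  set T := Fintype.piFinset P with hT
  have hTne : T.Nonempty :=
    ⟨fun i => (hne i).choose, Fintype.mem_piFinset.mpr fun i => (hne i).choose_spec⟩
  set φ : (Fin (d + 1) → EuclideanSpace ℝ (Fin d)) → ℝ :=
    fun g => Metric.infDist 0 (convexHull ℝ (Set.range g)) with hφ
  obtain ⟨f, hfT, hmin⟩ := T.exists_min_image φ hTne
  have hfP : ∀ i, f i ∈ P i := Fintype.mem_piFinset.mp hfT
  set K := convexHull ℝ (Set.range f) with hK
  have hKcp : IsCompact K := (Set.finite_range f).isCompact_convexHull ℝ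
  have hKne : K.Nonempty := by
    rw [hK, convexHull_nonempty_iff]; exact Set.range_nonempty f
  obtain ⟨y, hyK, hyd⟩ := hKcp.exists_infDist_eq_dist hKne 0
  have hnorm : φ f = ‖y‖ := by rw [hφ]; simp only [← hK]; rw [hyd, dist_zero_left]
  by_cases hy0 : y = 0
  · -- the transversal works
    refine ⟨Finset.image f Finset.univ, ?_, ?_, ?_⟩
    · intro z hz
      obtain ⟨j, _, rfl⟩ := Finset.mem_image.mp hz
      exact Finset.mem_biUnion.mpr ⟨j, Finset.mem_univ j, hfP j⟩
    · have : (↑(Finset.image f Finset.univ) : Set (EuclideanSpace ℝ (Fin d)))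
          = Set.range f := by
        rw [Finset.coe_image, Finset.coe_univ, Set.image_univ]
      rw [this, ← hK]
      exact hy0 ▸ hyK
    · intro i
      have hsub : Finset.image f Finset.univ ∩ P i ⊆ {f i} := by
        intro z hz
        obtain ⟨hz1, hz2⟩ := Finset.mem_inter.mp hz
        obtain ⟨j, _, rfl⟩ := Finset.mem_image.mp hz1
        rcases eq_or_ne j i with rfl | hji
        · exact Finset.mem_singleton_self _
        · exact absurd hz2 (Finset.disjoint_left.mp (hdisj j i hji) (hfP j))
      calc (Finset.image f Finset.univ ∩ P i).card ≤ ({f i} : Finset _).card :=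
            Finset.card_le_card hsub
        _ = 1 := Finset.card_singleton _
        _ ≤ (d + 2) / 2 := (Nat.one_le_div_iff two_pos).mpr (by omega)
  · -- derive a contradiction with minimality
    exfalso
    have hyne : (0:ℝ) < ‖y‖ := norm_pos_iff.mpr hy0
    have hvar : ∀ z ∈ K, ‖y‖ ^ 2 ≤ ⟪y, z⟫ := by
      intro z hz
      by_contra hlt
      push_neg at hlt
      have hc : ⟪y, z - y⟫ < 0 := by
        rw [inner_sub_right, real_inner_self_eq_norm_sq]; linarith
      obtain ⟨t, h1t, ht, hsum, hlt'⟩ := step_decreases y z hc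
      have hqK : (1 - t) • y + t • z ∈ K := (convex_convexHull ℝ _) hyK hz h1t ht hsum
      have hh := Metric.infDist_le_dist_of_mem (x := 0) hqK
      rw [hyd, dist_zero_left, dist_zero_left] at hh
      linarith
    set s : Finset (EuclideanSpace ℝ (Fin d)) := Finset.image f Finset.univ with hs
    have hsK : (↑s : Set (EuclideanSpace ℝ (Fin d))) = Set.range f := by
      rw [hs, Finset.coe_image, Finset.coe_univ, Set.image_univ]
    have hyK' : y ∈ convexHull ℝ (↑s : Set (EuclideanSpace ℝ (Fin d))) := by
      rw [hsK]; exact hyK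
    have hvs : ∀ z ∈ s, ‖y‖ ^ 2 ≤ ⟪y, z⟫ := by
      intro z hz
      refine hvar z (subset_convexHull ℝ _ ?_)
      rw [← hsK]; exact hz
    have hface := mem_convexHull_face s y hyK' hvs
    rw [convexHull_eq_union] at hface
    simp only [Set.mem_iUnion] at hface
    obtain ⟨t, htsub, htAI, hyt⟩ := hface
    have hcard' : t.card ≤ d := by
      have := card_le_of_on_hyperplane t y hy0 htAI
        (fun z hz => (htsub hz).2)
      rwa [finrank_euclideanSpace_fin] at this
    have hidx : ∃ i : Fin (d + 1), ∀ z ∈ t, ∃ j, j ≠ i ∧ f j = z := by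
      by_contra hc
      push_neg at hc
      choose z hzmem hzi using hc
      have hzfi : ∀ i, z i = f i := by
        intro i
        have hzs : z i ∈ s := (htsub (hzmem i)).1
        obtain ⟨j, _, hj⟩ := Finset.mem_image.mp hzs
        rcases eq_or_ne j i with rfl | hji
        · exact hj.symm
        · exact absurd hj (hzi i j hji)
      have hinj : Function.Injective fun i => (⟨z i, hzmem i⟩ : ↥t) := by
        intro a b hab
        by_contra hab'
        have hzz : z a = z b := congrArg Subtype.val hab
        exact hzi a b (fun h => hab' h.symm) ((hzz.trans (hzfi b)).symm)
      have := Fintype.card_le_of_injective _ hinj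
      rw [Fintype.card_fin, Fintype.card_coe] at this
      omega
    obtain ⟨i, hi⟩ := hidx
    have hp : ∃ p ∈ P i, ⟪y, p⟫ ≤ 0 := by
      by_contra hc
      push_neg at hc
      have hlin : IsLinearMap ℝ (fun z : EuclideanSpace ℝ (Fin d) => ⟪y, z⟫) :=
        ⟨fun a b => inner_add_right _ _ _,
         fun c x => by rw [smul_eq_mul]; exact real_inner_smul_right y x c⟩
      have hcvx : Convex ℝ {z : EuclideanSpace ℝ (Fin d) | (0:ℝ) < ⟪y, z⟫} :=
        convex_halfSpace_gt hlin 0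
      have hsubhalf : convexHull ℝ (↑(P i) : Set (EuclideanSpace ℝ (Fin d)))
          ⊆ {z | (0:ℝ) < ⟪y, z⟫} :=
        convexHull_min (fun q hq => hc q hq) hcvx
      have := hsubhalf (h0 i)
      simp only [Set.mem_setOf_eq, inner_zero_right] at this
      exact lt_irrefl _ this
    obtain ⟨p, hpPi, hpy⟩ := hp
    set f' := Function.update f i p with hf'
    have hf'T : f' ∈ T := by
      refine Fintype.mem_piFinset.mpr fun j => ?_
      rcases eq_or_ne j i with rfl | hj
      · rw [hf', Function.update_self]; exact hpPi
      · rw [hf', Function.update_of_ne hj]; exact hfP j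
    have hyK'' : y ∈ convexHull ℝ (Set.range f') := by
      refine convexHull_mono ?_ hyt
      intro z hz
      obtain ⟨j, hji, hfj⟩ := hi z hz
      exact ⟨j, by rw [hf', Function.update_of_ne hji]; exact hfj⟩
    have hpK' : p ∈ convexHull ℝ (Set.range f') :=
      subset_convexHull ℝ _ ⟨i, by rw [hf', Function.update_self]⟩
    have hcp : ⟪y, p - y⟫ < 0 := by
      rw [inner_sub_right, real_inner_self_eq_norm_sq]
      nlinarith
    obtain ⟨t', h1t, ht, hsum, hlt'⟩ := step_decreases y p hcp
    have hqK' : (1 - t') • y + t' • p ∈ convexHull ℝ (Set.range f') :=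
      (convex_convexHull ℝ _) hyK'' hpK' h1t ht hsum
    have hle2 : φ f' ≤ ‖(1 - t') • y + t' • p‖ := by
      have hh := Metric.infDist_le_dist_of_mem (x := 0) hqK'
      rwa [dist_zero_left] at hh
    have hmin' : φ f ≤ φ f' := hmin f' hf'T
    rw [hnorm] at hmin'
    linarith

end Main
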